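/- arXiv:1805.00533 — 6 statements merged into one kernel-verified Lean document; each statement's English description precedes it below -/
import Mathlib

section
/- ∫₀^∞ t e^{-t²/2} Φ(ρt/√(1-ρ²)) dt = (1+ρ)/2, where Φ is the standard normal CDF and -1 < ρ < 1. -/
open MeasureTheory Real Filter Set Topology

noncomputable def Phi (x : ℝ) : ℝ :=
  ∫ s in Set.Iic x, (1 / Real.sqrt (2 * Real.pi)) * Real.exp (-s ^ 2 / 2)

noncomputable def stdPdf (x : ℝ) : ℝ := (1 / Real.sqrt (2 * Real.pi)) * Real.exp (-x ^ 2 / 2)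

noncomputable def phi2 (ρ x y : ℝ) : ℝ :=
  (1 / (2 * Real.pi * Real.sqrt (1 - ρ ^ 2))) *
    Real.exp (-(x ^ 2 - 2 * ρ * x * y + y ^ 2) / (2 * (1 - ρ ^ 2)))

noncomputable def sg (x : ℝ) : ℝ := if 0 ≤ x then 1 else -1

lemma stdPdf_cont : Continuous stdPdf := by
  unfold stdPdf; continuity

lemma stdPdf_nonneg (x : ℝ) : 0 ≤ stdPdf x := by
  unfold stdPdf
  positivity

lemma integrable_stdPdf : Integrable stdPdf := by
  have := (integrable_exp_neg_mul_sq (by norm_num : (0:ℝ) < 1/2)).const_mul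
    (1 / Real.sqrt (2 * Real.pi))
  convert this using 2 with x
  unfold stdPdf
  ring_nf

lemma integral_stdPdf : ∫ x, stdPdf x = 1 := by
  have h : ∫ x, stdPdf x = (1 / Real.sqrt (2 * Real.pi)) * ∫ x, Real.exp (-(1/2) * x ^ 2) := by
    rw [← integral_const_mul]
    congr 1 with x
    unfold stdPdf
    ring_nf
  rw [h, integral_gaussian]
  have : Real.sqrt (π / (1/2)) = Real.sqrt (2 * π) := by norm_num; ring_nf
  rw [this]
  have h2 : Real.sqrt (2 * π) ≠ 0 := by positivity
  field_simp

lemma Phi_eq (x : ℝ) : Phi x = ∫ s in Set.Iic x, stdPdf s := rfl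

lemma Phi_nonneg (x : ℝ) : 0 ≤ Phi x := by
  rw [Phi_eq]
  exact setIntegral_nonneg measurableSet_Iic fun s _ => stdPdf_nonneg s

lemma Phi_le_one (x : ℝ) : Phi x ≤ 1 := by
  rw [Phi_eq, ← integral_stdPdf]
  exact setIntegral_le_integral integrable_stdPdf (Eventually.of_forall stdPdf_nonneg)

lemma Phi_zero : Phi 0 = 1 / 2 := by
  have key : ∫ s in Set.Ioi (0:ℝ), stdPdf s = Phi 0 := by
    have h0 := integral_comp_neg_Ioi (0:ℝ) stdPdf
    rw [neg_zero] at h0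
    rw [Phi_eq, ← h0]
    congr 1 with s
    unfold stdPdf
    ring_nf
  have tot : Phi 0 + ∫ s in Set.Ioi (0:ℝ), stdPdf s = 1 := by
    rw [Phi_eq, intervalIntegral.integral_Iic_add_Ioi integrable_stdPdf.integrableOn integrable_stdPdf.integrableOn,
      integral_stdPdf]
  rw [key] at tot
  linarith

lemma hasDerivAt_Phi (x : ℝ) : HasDerivAt Phi (stdPdf x) x := by
  have hPhi : Phi = fun y => Phi 0 + ∫ s in (0:ℝ)..y, stdPdf s := by
    funext y
    rw [Phi_eq, Phi_eq, ← intervalIntegral.integral_Iic_sub_Iic integrable_stdPdf.integrableOn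
      integrable_stdPdf.integrableOn]
    ring
  rw [hPhi]
  exact (intervalIntegral.integral_hasDerivAt_right
    (stdPdf_cont.intervalIntegrable _ _)
    (stdPdf_cont.stronglyMeasurableAtFilter _ _)
    stdPdf_cont.continuousAt).const_add _

lemma Phi_cont : Continuous Phi :=
  continuous_iff_continuousAt.2 fun x => (hasDerivAt_Phi x).continuousAt

lemma tendsto_Phi : Tendsto Phi atTop (𝓝 1) := by
  have he : ∀ y, Phi y = Phi 0 + ∫ s in (0:ℝ)..y, stdPdf s := fun y => by
    rw [Phi_eq, Phi_eq, ← intervalIntegral.integral_Iic_sub_Iic integrable_stdPdf.integrableOn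
      integrable_stdPdf.integrableOn]
    ring
  have h : Tendsto (fun y => Phi 0 + ∫ s in (0:ℝ)..y, stdPdf s) atTop
      (𝓝 (Phi 0 + ∫ s in Set.Ioi (0:ℝ), stdPdf s)) :=
    tendsto_const_nhds.add
      (intervalIntegral_tendsto_integral_Ioi 0 integrable_stdPdf.integrableOn tendsto_id)
  have hval : Phi 0 + ∫ s in Set.Ioi (0:ℝ), stdPdf s = 1 := by
    rw [Phi_eq, intervalIntegral.integral_Iic_add_Ioi integrable_stdPdf.integrableOn
      integrable_stdPdf.integrableOn, integral_stdPdf]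
  simp only [← he] at h
  rwa [hval] at h

theorem stmt0 (ρ : ℝ) (h1 : -1 < ρ) (h2 : ρ < 1) :
    ∫ t in Set.Ioi (0 : ℝ), t * Real.exp (-t ^ 2 / 2) * Phi (ρ * t / Real.sqrt (1 - ρ ^ 2))
      = (1 + ρ) / 2 := by
  set b := Real.sqrt (1 - ρ ^ 2) with hbdef
  have hb : 0 < b := Real.sqrt_pos.2 (by nlinarith)
  have hb2 : b ^ 2 = 1 - ρ ^ 2 := Real.sq_sqrt (by nlinarith)
  set G : ℝ → ℝ := fun t => -(Real.exp (-t ^ 2 / 2) * Phi (ρ * t / b)) + ρ * Phi (t / b) with hG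
  have hderiv : ∀ t : ℝ, HasDerivAt G (t * Real.exp (-t ^ 2 / 2) * Phi (ρ * t / b)) t := by
    intro t
    have hexp : HasDerivAt (fun t : ℝ => Real.exp (-t ^ 2 / 2)) (-t * Real.exp (-t ^ 2 / 2)) t := by
      have h1 : HasDerivAt (fun t : ℝ => -t ^ 2 / 2) (-t) t := by
        have := ((hasDerivAt_pow 2 t).neg).div_const 2
        refine this.congr_deriv ?_
        push_cast
        ring
      simpa [mul_comm] using h1.exp
    have harg1 : HasDerivAt (fun t : ℝ => ρ * t / b) (ρ / b) t := by
      simpa using ((hasDerivAt_id t).const_mul ρ).div_const b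
    have harg2 : HasDerivAt (fun t : ℝ => t / b) (1 / b) t := by
      simpa using (hasDerivAt_id t).div_const b
    have hP1 : HasDerivAt (fun t : ℝ => Phi (ρ * t / b)) (ρ / b * stdPdf (ρ * t / b)) t := by
      simpa [Function.comp_def, mul_comm] using (hasDerivAt_Phi (ρ * t / b)).comp t harg1
    have hP2 : HasDerivAt (fun t : ℝ => Phi (t / b)) (1 / b * stdPdf (t / b)) t := by
      simpa [Function.comp_def, mul_comm] using (hasDerivAt_Phi (t / b)).comp t harg2
    have hfull := ((hexp.mul hP1).neg).add (hP2.const_mul ρ)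
    refine hfull.congr_deriv ?_
    have key : Real.exp (-t ^ 2 / 2) * stdPdf (ρ * t / b) = stdPdf (t / b) := by
      unfold stdPdf
      rw [mul_left_comm, ← Real.exp_add]
      congr 2
      rw [div_pow, div_pow, hb2]
      have h3 : (1:ℝ) - ρ ^ 2 ≠ 0 := by nlinarith
      field_simp
      ring
    rw [← key]
    ring
  have hint : IntegrableOn (fun t => t * Real.exp (-t ^ 2 / 2) * Phi (ρ * t / b)) (Set.Ioi 0) := by
    have hg : IntegrableOn (fun t : ℝ => t * Real.exp (-(1/2) * t ^ 2)) (Set.Ioi 0) :=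
      (integrable_mul_exp_neg_mul_sq (by norm_num : (0:ℝ) < 1/2)).integrableOn
    apply Integrable.mono' hg
    · exact ((continuous_id.mul (by continuity)).mul
        (Phi_cont.comp (by continuity))).aestronglyMeasurable
    · filter_upwards [ae_restrict_mem measurableSet_Ioi] with t ht
      have ht0 : 0 < t := ht
      have hnn : 0 ≤ t * Real.exp (-t ^ 2 / 2) * Phi (ρ * t / b) :=
        mul_nonneg (mul_nonneg ht0.le (Real.exp_pos _).le) (Phi_nonneg _)
      rw [Real.norm_eq_abs, abs_of_nonneg hnn]
      have hle : t * Real.exp (-t ^ 2 / 2) * Phi (ρ * t / b) ≤ t * Real.exp (-t ^ 2 / 2) * 1 :=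
        mul_le_mul_of_nonneg_left (Phi_le_one _) (mul_nonneg ht0.le (Real.exp_pos _).le)
      have heq : -t ^ 2 / 2 = -(1/2) * t ^ 2 := by ring
      rw [mul_one] at hle
      calc t * Real.exp (-t ^ 2 / 2) * Phi (ρ * t / b) ≤ t * Real.exp (-t ^ 2 / 2) := hle
        _ = t * Real.exp (-(1/2) * t ^ 2) := by rw [heq]
  have hlim : Tendsto G atTop (𝓝 ρ) := by
    have hexp : Tendsto (fun t : ℝ => Real.exp (-t ^ 2 / 2)) atTop (𝓝 0) := by
      have hsq : Tendsto (fun t : ℝ => t ^ 2 / 2) atTop atTop :=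
        (tendsto_pow_atTop two_ne_zero).atTop_div_const (by norm_num)
      have hneg : Tendsto (fun t : ℝ => -t ^ 2 / 2) atTop atBot := by
        simpa [Function.comp_def, neg_div] using tendsto_neg_atTop_atBot.comp hsq
      simpa [Function.comp_def] using Real.tendsto_exp_atBot.comp hneg
    have hm1 : Tendsto (fun t : ℝ => Real.exp (-t ^ 2 / 2) * Phi (ρ * t / b)) atTop (𝓝 0) := by
      apply squeeze_zero (fun t => mul_nonneg (Real.exp_pos _).le (Phi_nonneg _))
        (fun t => mul_le_of_le_one_right (Real.exp_pos _).le (Phi_le_one _)) hexp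
    have hm2 : Tendsto (fun t : ℝ => Phi (t / b)) atTop (𝓝 1) :=
      tendsto_Phi.comp (tendsto_id.atTop_div_const hb)
    have := (hm1.neg).add (hm2.const_mul ρ)
    simpa using this
  have hcont : ContinuousWithinAt G (Set.Ici 0) 0 :=
    (hderiv 0).continuousAt.continuousWithinAt
  rw [integral_Ioi_of_hasDerivAt_of_tendsto hcont (fun x _ => hderiv x) hint hlim]
  simp only [hG]
  norm_num [Phi_zero]
  ring
end

section
/- For β > 0, ∫₀^∞ √x · erfc(√x) · e^{-βx} dx = (1/√π)·(arctan(√β)/β^{3/2} − 1/(β(1+β))). -/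
open MeasureTheory Real Filter Set
open Topology

noncomputable def erfc (t : ℝ) : ℝ := (2 / Real.sqrt Real.pi) * ∫ s in Set.Ioi t, Real.exp (-s ^ 2)


lemma gauss_integrable : Integrable (fun s : ℝ => Real.exp (-s ^ 2)) := by
  simpa using integrable_exp_neg_mul_sq (one_pos (α := ℝ))

lemma erfc_eq (t : ℝ) :
    erfc t = (2 / Real.sqrt Real.pi) *
      ((∫ s in Set.Ioi (0:ℝ), Real.exp (-s ^ 2)) - ∫ s in (0:ℝ)..t, Real.exp (-s ^ 2)) := by
  unfold erfc
  congr 1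
  have h := intervalIntegral.integral_Iic_sub_Iic (μ := volume) (f := fun s : ℝ => Real.exp (-s ^ 2))
    gauss_integrable.integrableOn gauss_integrable.integrableOn (a := 0) (b := t)
  have h0 := intervalIntegral.integral_Iic_add_Ioi (μ := volume) (f := fun s : ℝ => Real.exp (-s ^ 2))
    (b := (0:ℝ)) gauss_integrable.integrableOn gauss_integrable.integrableOn
  have ht := intervalIntegral.integral_Iic_add_Ioi (μ := volume) (f := fun s : ℝ => Real.exp (-s ^ 2))
    (b := t) gauss_integrable.integrableOn gauss_integrable.integrableOn
  linarith

lemma erfc_hasDerivAt (t : ℝ) :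
    HasDerivAt erfc (-(2 / Real.sqrt Real.pi) * Real.exp (-t ^ 2)) t := by
  have hcont : Continuous fun s : ℝ => Real.exp (-s ^ 2) := by continuity
  have h : HasDerivAt (fun u => ∫ s in (0:ℝ)..u, Real.exp (-s ^ 2)) (Real.exp (-t ^ 2)) t :=
    intervalIntegral.integral_hasDerivAt_right (hcont.intervalIntegrable _ _)
      (hcont.stronglyMeasurableAtFilter _ _) hcont.continuousAt
  have h2 := ((hasDerivAt_const t (∫ s in Set.Ioi (0:ℝ), Real.exp (-s ^ 2))).sub h).const_mul
    (2 / Real.sqrt Real.pi)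
  simp only [zero_sub, mul_neg] at h2
  have : erfc = fun u => (2 / Real.sqrt Real.pi) *
      ((∫ s in Set.Ioi (0:ℝ), Real.exp (-s ^ 2)) - ∫ s in (0:ℝ)..u, Real.exp (-s ^ 2)) :=
    funext erfc_eq
  rw [this]
  refine h2.congr_deriv ?_
  ring

lemma erfc_continuous : Continuous erfc :=
  continuous_iff_continuousAt.2 fun t => (erfc_hasDerivAt t).continuousAt

lemma erfc_nonneg (t : ℝ) : 0 ≤ erfc t := by
  unfold erfc
  apply mul_nonneg (by positivity)
  exact setIntegral_nonneg measurableSet_Ioi fun s _ => (Real.exp_pos _).le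

lemma erfc_le_two (t : ℝ) : erfc t ≤ 2 := by
  unfold erfc
  have h1 : (∫ s in Set.Ioi t, Real.exp (-s ^ 2)) ≤ ∫ s : ℝ, Real.exp (-s ^ 2) :=
    setIntegral_le_integral gauss_integrable (Eventually.of_forall fun s => (Real.exp_pos _).le)
  have h2 : (∫ s : ℝ, Real.exp (-s ^ 2)) = Real.sqrt Real.pi := by
    have := integral_gaussian 1
    simpa using this
  have hπ : (0:ℝ) < Real.sqrt Real.pi := Real.sqrt_pos.2 Real.pi_pos
  calc (2 / Real.sqrt Real.pi) * ∫ s in Set.Ioi t, Real.exp (-s ^ 2)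
      ≤ (2 / Real.sqrt Real.pi) * Real.sqrt Real.pi := by
        apply mul_le_mul_of_nonneg_left (h1.trans_eq h2) (by positivity)
    _ = 2 := by field_simp

lemma erfc_integral (t : ℝ) :
    (∫ s in Set.Ioi t, Real.exp (-s ^ 2)) = Real.sqrt Real.pi / 2 * erfc t := by
  unfold erfc
  have hπ : (0:ℝ) < Real.sqrt Real.pi := Real.sqrt_pos.2 Real.pi_pos
  field_simp

noncomputable def W (β t : ℝ) : ℝ :=
  ∫ u in Set.Ioi (1:ℝ), Real.exp (-t ^ 2 * (β + u ^ 2)) / (β + u ^ 2)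

variable {β : ℝ}

lemma den_pos (hβ : 0 < β) (u : ℝ) : 0 < β + u ^ 2 := by positivity

lemma inv_den_integrableOn (hβ : 0 < β) :
    IntegrableOn (fun u : ℝ => 1 / (β + u ^ 2)) (Set.Ioi 1) := by
  have h : ∀ u ∈ Set.Ici (1:ℝ), HasDerivAt (fun u => (Real.sqrt β)⁻¹ * Real.arctan (u / Real.sqrt β))
      (1 / (β + u ^ 2)) u := by
    intro u _
    have hb : (0:ℝ) < Real.sqrt β := Real.sqrt_pos.2 hβ
    have h1 : HasDerivAt (fun u : ℝ => u / Real.sqrt β) (1 / Real.sqrt β) u := by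
      simpa using (hasDerivAt_id u).div_const (Real.sqrt β)
    have h2 := (Real.hasDerivAt_arctan (u / Real.sqrt β)).comp u h1
    have h3 := h2.const_mul (Real.sqrt β)⁻¹
    refine h3.congr_deriv ?_
    have hb2 : Real.sqrt β ^ 2 = β := Real.sq_sqrt hβ.le
    have hb : (0:ℝ) < Real.sqrt β := Real.sqrt_pos.2 hβ
    rw [← hb2]
    field_simp
    rw [Real.sqrt_sq hb.le]
  have htends : Tendsto (fun u : ℝ => (Real.sqrt β)⁻¹ * Real.arctan (u / Real.sqrt β)) atTop
      (𝓝 ((Real.sqrt β)⁻¹ * (Real.pi / 2))) := by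
    have hb : (0:ℝ) < Real.sqrt β := Real.sqrt_pos.2 hβ
    apply Tendsto.const_mul
    exact (tendsto_nhds_of_tendsto_nhdsWithin Real.tendsto_arctan_atTop).comp
      (tendsto_id.atTop_div_const hb)
  exact integrableOn_Ioi_deriv_of_nonneg' h (fun u _ => by positivity) htends

lemma inv_den_integral (hβ : 0 < β) :
    (∫ u in Set.Ioi (1:ℝ), 1 / (β + u ^ 2)) = Real.arctan (Real.sqrt β) / Real.sqrt β := by
  have hb : (0:ℝ) < Real.sqrt β := Real.sqrt_pos.2 hβ
  have h : ∀ u ∈ Set.Ici (1:ℝ), HasDerivAt (fun u => (Real.sqrt β)⁻¹ * Real.arctan (u / Real.sqrt β))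
      (1 / (β + u ^ 2)) u := by
    intro u _
    have h1 : HasDerivAt (fun u : ℝ => u / Real.sqrt β) (1 / Real.sqrt β) u := by
      simpa using (hasDerivAt_id u).div_const (Real.sqrt β)
    have h2 := (Real.hasDerivAt_arctan (u / Real.sqrt β)).comp u h1
    have h3 := h2.const_mul (Real.sqrt β)⁻¹
    refine h3.congr_deriv ?_
    have hb2 : Real.sqrt β ^ 2 = β := Real.sq_sqrt hβ.le
    have hb : (0:ℝ) < Real.sqrt β := Real.sqrt_pos.2 hβ
    rw [← hb2]
    field_simp
    rw [Real.sqrt_sq hb.le]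
  have htends : Tendsto (fun u : ℝ => (Real.sqrt β)⁻¹ * Real.arctan (u / Real.sqrt β)) atTop
      (𝓝 ((Real.sqrt β)⁻¹ * (Real.pi / 2))) := by
    apply Tendsto.const_mul
    exact (tendsto_nhds_of_tendsto_nhdsWithin Real.tendsto_arctan_atTop).comp
      (tendsto_id.atTop_div_const hb)
  have := integral_Ioi_of_hasDerivAt_of_nonneg' h (fun u _ => by positivity) htends
  rw [this]
  have harc : Real.arctan (1 / Real.sqrt β) = Real.pi / 2 - Real.arctan (Real.sqrt β) := by
    rw [one_div, Real.arctan_inv_of_pos hb]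
  rw [harc]
  field_simp
  ring

lemma W_zero (hβ : 0 < β) : W β 0 = Real.arctan (Real.sqrt β) / Real.sqrt β := by
  unfold W
  rw [← inv_den_integral hβ]
  apply setIntegral_congr_fun measurableSet_Ioi
  intro u _
  norm_num

lemma W_int_cont (hβ : 0 < β) (t : ℝ) :
    Continuous fun u : ℝ => Real.exp (-t ^ 2 * (β + u ^ 2)) / (β + u ^ 2) := by
  apply Continuous.div (by continuity) (by continuity)
  intro u
  exact (den_pos hβ u).ne'

lemma W_le_aux (hβ : 0 < β) (t u : ℝ) :
    Real.exp (-t ^ 2 * (β + u ^ 2)) / (β + u ^ 2) ≤ 1 / (β + u ^ 2) := by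
  have hc := den_pos hβ u
  gcongr
  exact Real.exp_le_one_iff.2 (by nlinarith [sq_nonneg t, sq_nonneg u])

lemma W_integrableOn (hβ : 0 < β) (t : ℝ) :
    IntegrableOn (fun u : ℝ => Real.exp (-t ^ 2 * (β + u ^ 2)) / (β + u ^ 2)) (Set.Ioi 1) := by
  apply Integrable.mono (inv_den_integrableOn hβ) ((W_int_cont hβ t).aestronglyMeasurable)
  apply Eventually.of_forall
  intro u
  have hc := den_pos hβ u
  rw [Real.norm_eq_abs, Real.norm_eq_abs, abs_of_nonneg (by positivity),
    abs_of_nonneg (by positivity)]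
  exact W_le_aux hβ t u

lemma W_hasDerivAt (hβ : 0 < β) {t : ℝ} (ht : 0 < t) :
    HasDerivAt (W β) (-Real.sqrt Real.pi * Real.exp (-β * t ^ 2) * erfc t) t := by
  set μ := volume.restrict (Set.Ioi (1:ℝ)) with hμ
  have key := hasDerivAt_integral_of_dominated_loc_of_deriv_le
    (μ := μ) (x₀ := t) (s := Metric.ball t (t/2))
    (F := fun x u => Real.exp (-x ^ 2 * (β + u ^ 2)) / (β + u ^ 2))
    (F' := fun x u => -2 * x * Real.exp (-x ^ 2 * (β + u ^ 2)))
    (bound := fun u => 3 * t * Real.exp (-(t/2) ^ 2 * (β + u ^ 2)))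
    (Metric.ball_mem_nhds t (by positivity))
    (Eventually.of_forall fun x => ((W_int_cont hβ x).aestronglyMeasurable))
    (W_integrableOn hβ t)
    (Continuous.aestronglyMeasurable (by continuity))
    ?_ ?_ ?_
  · obtain ⟨-, hd⟩ := key
    have heq : (∫ u, -2 * t * Real.exp (-t ^ 2 * (β + u ^ 2)) ∂μ)
        = -Real.sqrt Real.pi * Real.exp (-β * t ^ 2) * erfc t := by
      have h1 : ∀ u : ℝ, -2 * t * Real.exp (-t ^ 2 * (β + u ^ 2))
          = (-2 * t * Real.exp (-t ^ 2 * β)) * Real.exp (-(t * u) ^ 2) := by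
        intro u
        rw [show (-2 * t * Real.exp (-t ^ 2 * β)) * Real.exp (-(t * u) ^ 2)
            = -2 * t * (Real.exp (-t ^ 2 * β) * Real.exp (-(t * u) ^ 2)) by ring,
          ← Real.exp_add]
        congr 2
        ring
      rw [hμ]
      simp only [h1]
      rw [MeasureTheory.integral_const_mul]
      have h2 := integral_comp_mul_left_Ioi (fun v => Real.exp (-v ^ 2)) 1 ht
      simp only [mul_one, smul_eq_mul] at h2
      rw [h2, erfc_integral t]
      field_simp
    rw [← heq]
    exact hd
  · -- bound
    apply Eventually.of_forall
    intro u x hx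
    have hc := den_pos hβ u
    rw [Metric.mem_ball, Real.dist_eq, abs_sub_lt_iff] at hx
    have hx1 : t/2 < x := by linarith [hx.2]
    have hx2 : x < 3*t/2 := by linarith [hx.1]
    have he : Real.exp (-x ^ 2 * (β + u ^ 2)) ≤ Real.exp (-(t/2) ^ 2 * (β + u ^ 2)) := by
      apply Real.exp_le_exp.2
      have hsq : (t/2) ^ 2 ≤ x ^ 2 := by nlinarith
      nlinarith [mul_le_mul_of_nonneg_right hsq hc.le]
    have hxpos : 0 < x := lt_trans (by positivity) hx1
    rw [Real.norm_eq_abs, abs_mul, abs_mul, abs_of_pos (Real.exp_pos _),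
      abs_of_pos hxpos]
    have h2 : |(-2 : ℝ)| = 2 := by norm_num
    rw [h2]
    nlinarith [Real.exp_pos (-x ^ 2 * (β + u ^ 2)), Real.exp_pos (-(t/2) ^ 2 * (β + u ^ 2))]
  · -- bound integrable
    have heq : (fun u : ℝ => 3 * t * Real.exp (-(t/2) ^ 2 * (β + u ^ 2)))
        = fun u : ℝ => (3 * t * Real.exp (-(t/2) ^ 2 * β)) * Real.exp (-((t/2) ^ 2) * u ^ 2) := by
      funext u
      rw [show (3 * t * Real.exp (-(t/2) ^ 2 * β)) * Real.exp (-((t/2) ^ 2) * u ^ 2)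
          = 3 * t * (Real.exp (-(t/2) ^ 2 * β) * Real.exp (-((t/2) ^ 2) * u ^ 2)) by ring,
        ← Real.exp_add]
      congr 2
      ring
    rw [heq, hμ]
    exact (((integrable_exp_neg_mul_sq (by positivity : (0:ℝ) < (t/2) ^ 2)).const_mul
      _).restrict)
  · -- differentiability
    apply Eventually.of_forall
    intro u x hx
    have hc := (den_pos hβ u).ne'
    have h1 : HasDerivAt (fun x : ℝ => -x ^ 2 * (β + u ^ 2)) (-2 * x * (β + u ^ 2)) x := by
      have := ((hasDerivAt_pow 2 x).neg.mul_const (β + u ^ 2))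
      refine this.congr_deriv ?_
      simp
    have h2 := h1.exp.div_const (β + u ^ 2)
    refine h2.congr_deriv ?_
    field_simp

lemma W_nonneg (hβ : 0 < β) (t : ℝ) : 0 ≤ W β t :=
  setIntegral_nonneg measurableSet_Ioi fun u _ => by positivity

lemma W_le (hβ : 0 < β) (t : ℝ) :
    W β t ≤ Real.exp (-t ^ 2 * β) * (Real.arctan (Real.sqrt β) / Real.sqrt β) := by
  unfold W
  calc (∫ u in Set.Ioi (1:ℝ), Real.exp (-t ^ 2 * (β + u ^ 2)) / (β + u ^ 2))
      ≤ ∫ u in Set.Ioi (1:ℝ), Real.exp (-t ^ 2 * β) * (1 / (β + u ^ 2)) := by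
        apply setIntegral_mono_on (W_integrableOn hβ t)
          ((inv_den_integrableOn hβ).const_mul _) measurableSet_Ioi
        intro u _
        have hc := den_pos hβ u
        rw [show -t ^ 2 * (β + u ^ 2) = -t ^ 2 * β + -t ^ 2 * u ^ 2 by ring, Real.exp_add,
          mul_div_assoc]
        gcongr
        exact Real.exp_le_one_iff.2 (by nlinarith [sq_nonneg t, sq_nonneg u])
    _ = Real.exp (-t ^ 2 * β) * (Real.arctan (Real.sqrt β) / Real.sqrt β) := by
        rw [MeasureTheory.integral_const_mul, inv_den_integral hβ]

lemma W_continuousAt_zero (hβ : 0 < β) : ContinuousAt (W β) 0 := by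
  apply continuousAt_of_dominated (bound := fun u => 1 / (β + u ^ 2))
    (Eventually.of_forall fun x => (W_int_cont hβ x).aestronglyMeasurable)
    (Eventually.of_forall fun x => Eventually.of_forall fun u => ?_)
    (inv_den_integrableOn hβ)
    (Eventually.of_forall fun u => ?_)
  · rw [Real.norm_eq_abs, abs_of_nonneg (by positivity)]
    exact W_le_aux hβ x u
  · have : Continuous fun x : ℝ => Real.exp (-x ^ 2 * (β + u ^ 2)) / (β + u ^ 2) :=
      ((Continuous.rexp (by continuity)).div_const _)
    exact this.continuousAt

lemma W_sqrt_tendsto (hβ : 0 < β) :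
    Tendsto (fun x => W β (Real.sqrt x)) atTop (𝓝 0) := by
  set C := Real.arctan (Real.sqrt β) / Real.sqrt β
  have hup : Tendsto (fun x : ℝ => Real.exp (-(β * x)) * C) atTop (𝓝 0) := by
    have h1 : Tendsto (fun x : ℝ => β * x) atTop atTop :=
      tendsto_id.const_mul_atTop hβ
    have := (Real.tendsto_exp_neg_atTop_nhds_zero.comp h1).mul_const C
    simpa using this
  apply tendsto_of_tendsto_of_tendsto_of_le_of_le' tendsto_const_nhds hup
  · exact Eventually.of_forall fun x => W_nonneg hβ _
  · filter_upwards [eventually_ge_atTop (0:ℝ)] with x hx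
    have := W_le hβ (Real.sqrt x)
    rwa [Real.sq_sqrt hx, show -x * β = -(β * x) by ring] at this

theorem stmt5 (β : ℝ) (hβ : 0 < β) :
    ∫ x in Set.Ioi (0 : ℝ), Real.sqrt x * erfc (Real.sqrt x) * Real.exp (-β * x)
      = (1 / Real.sqrt Real.pi) *
        (Real.arctan (Real.sqrt β) / β ^ ((3 : ℝ) / 2) - 1 / (β * (1 + β))) := by
  have hπ : (0:ℝ) < Real.sqrt Real.pi := Real.sqrt_pos.2 Real.pi_pos
  have hb1 : (0:ℝ) < 1 + β := by linarith
  set G : ℝ → ℝ := fun x => -(Real.sqrt x * erfc (Real.sqrt x) * Real.exp (-β * x) / β)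
      - (1 / (β * Real.sqrt Real.pi)) * W β (Real.sqrt x)
      + (1 / (β * Real.sqrt Real.pi * (1 + β))) * Real.exp (-(1 + β) * x) with hG
  have hderiv : ∀ x ∈ Set.Ioi (0:ℝ),
      HasDerivAt G (Real.sqrt x * erfc (Real.sqrt x) * Real.exp (-β * x)) x := by
    intro x hx
    have hx : (0:ℝ) < x := hx
    have hsx : 0 < Real.sqrt x := Real.sqrt_pos.2 hx
    have hS : HasDerivAt Real.sqrt (1 / (2 * Real.sqrt x)) x := Real.hasDerivAt_sqrt hx.ne'
    have hEr : HasDerivAt (fun y => erfc (Real.sqrt y))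
        (-(2 / Real.sqrt Real.pi) * Real.exp (-Real.sqrt x ^ 2) * (1 / (2 * Real.sqrt x))) x := by
      have := (erfc_hasDerivAt (Real.sqrt x)).comp x hS
      exact this
    have hE : HasDerivAt (fun y => Real.exp (-β * y)) (Real.exp (-β * x) * -β) x := by
      simpa using ((hasDerivAt_id x).const_mul (-β)).exp
    have hW : HasDerivAt (fun y => W β (Real.sqrt y))
        ((-Real.sqrt Real.pi * Real.exp (-β * Real.sqrt x ^ 2) * erfc (Real.sqrt x))
          * (1 / (2 * Real.sqrt x))) x := by
      have := (W_hasDerivAt hβ hsx).comp x hS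
      exact this
    have hE2 : HasDerivAt (fun y => Real.exp (-(1 + β) * y))
        (Real.exp (-(1 + β) * x) * -(1 + β)) x := by
      simpa using ((hasDerivAt_id x).const_mul (-(1 + β))).exp
    have h1 := (hS.mul hEr).mul hE
    have hG' := ((h1.div_const β).neg.sub (hW.const_mul (1 / (β * Real.sqrt Real.pi)))).add
      (hE2.const_mul (1 / (β * Real.sqrt Real.pi * (1 + β))))
    rw [hG]
    refine hG'.congr_deriv ?_
    rw [Real.sq_sqrt hx.le, show -(1 + β) * x = -x + -β * x by ring, Real.exp_add]
    field_simp
    simp only [Pi.mul_apply, Real.sq_sqrt hx.le]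
    ring_nf
    rw [Real.sq_sqrt hx.le]
  have hpos : ∀ x ∈ Set.Ioi (0:ℝ),
      0 ≤ Real.sqrt x * erfc (Real.sqrt x) * Real.exp (-β * x) := fun x _ =>
    mul_nonneg (mul_nonneg (Real.sqrt_nonneg x) (erfc_nonneg _)) (Real.exp_pos _).le
  have hcont : ContinuousWithinAt G (Set.Ici 0) 0 := by
    apply ContinuousAt.continuousWithinAt
    have c1 : Continuous fun x : ℝ => -(Real.sqrt x * erfc (Real.sqrt x) * Real.exp (-β * x) / β) :=
      ((((Real.continuous_sqrt.mul (erfc_continuous.comp Real.continuous_sqrt)).mul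
        (Real.continuous_exp.comp (by continuity))).div_const β).neg)
    have c2 : ContinuousAt (fun x : ℝ => W β (Real.sqrt x)) 0 := by
      have h0 : ContinuousAt (W β) (Real.sqrt 0) := by
        rw [Real.sqrt_zero]; exact W_continuousAt_zero hβ
      exact h0.comp Real.continuous_sqrt.continuousAt
    have c3 : Continuous fun x : ℝ => Real.exp (-(1 + β) * x) :=
      Real.continuous_exp.comp (by continuity)
    exact ((c1.continuousAt.sub (c2.const_mul _)).add (c3.continuousAt.const_mul _))
  have htop : Tendsto G atTop (𝓝 0) := by
    have t1 : Tendsto (fun x => Real.sqrt x * erfc (Real.sqrt x) * Real.exp (-β * x))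
        atTop (𝓝 0) := by
      have hup : Tendsto (fun x : ℝ => 2 * (x ^ ((1:ℝ)/2) * Real.exp (-β * x))) atTop (𝓝 0) := by
        have := (tendsto_rpow_mul_exp_neg_mul_atTop_nhds_zero ((1:ℝ)/2) β hβ).const_mul 2
        simpa using this
      apply tendsto_of_tendsto_of_tendsto_of_le_of_le' tendsto_const_nhds hup
      · filter_upwards [eventually_ge_atTop (0:ℝ)] with x hx
        exact mul_nonneg (mul_nonneg (Real.sqrt_nonneg x) (erfc_nonneg _)) (Real.exp_pos _).le
      · filter_upwards [eventually_ge_atTop (0:ℝ)] with x hx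
        rw [← Real.sqrt_eq_rpow]
        have h1 := mul_le_mul_of_nonneg_right
          (mul_le_mul_of_nonneg_left (erfc_le_two (Real.sqrt x)) (Real.sqrt_nonneg x))
          (Real.exp_pos (-β * x)).le
        nlinarith [Real.exp_pos (-β * x), Real.sqrt_nonneg x]
    have t2 := W_sqrt_tendsto hβ
    have t3 : Tendsto (fun x : ℝ => Real.exp (-(1 + β) * x)) atTop (𝓝 0) := by
      have h1 : Tendsto (fun x : ℝ => (1 + β) * x) atTop atTop :=
        tendsto_id.const_mul_atTop hb1
      have h2 := Real.tendsto_exp_neg_atTop_nhds_zero.comp h1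
      refine h2.congr fun x => ?_
      simp only [Function.comp_apply]
      rw [neg_mul]
    have hcomb := ((t1.div_const β).neg.sub (t2.const_mul (1 / (β * Real.sqrt Real.pi)))).add
      (t3.const_mul (1 / (β * Real.sqrt Real.pi * (1 + β))))
    have hval : -((0:ℝ)/β) - 1/(β*Real.sqrt Real.pi)*0 + 1/(β*Real.sqrt Real.pi*(1+β))*0 = 0 := by
      ring
    rw [hG, ← hval]
    exact hcomb
  rw [integral_Ioi_of_hasDerivAt_of_nonneg hcont hderiv hpos htop]
  have hG0 : G 0 = -(1 / (β * Real.sqrt Real.pi)) * (Real.arctan (Real.sqrt β) / Real.sqrt β)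
      + 1 / (β * Real.sqrt Real.pi * (1 + β)) := by
    rw [hG]
    simp [Real.sqrt_zero, W_zero hβ]
  rw [hG0]
  have hpow : β ^ ((3:ℝ)/2) = β * Real.sqrt β := by
    rw [show (3:ℝ)/2 = 1 + 1/2 by norm_num, Real.rpow_add hβ, Real.rpow_one,
      ← Real.sqrt_eq_rpow]
  rw [hpow]
  have hbb : (0:ℝ) < Real.sqrt β := Real.sqrt_pos.2 hβ
  field_simp
  ring
end

section
/- If (X,Y) is bivariate normal with standard normal marginals and correlation ρ ∈ (-1,1), then E[sgn(X)·Y³] = (6ρ − 2ρ³)/√(2π). -/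
open MeasureTheory Real Filter Set

open Topology

lemma aux_int {b : ℝ} (hb : 0 < b) (n : ℕ) :
    Integrable (fun x : ℝ => x ^ n * Real.exp (-b * x ^ 2)) := by
  have hmeas : AEStronglyMeasurable (fun x : ℝ => x ^ n * Real.exp (-b * x ^ 2))
      (volume : Measure ℝ) :=
    ((measurable_id.pow_const n).mul
      (((measurable_id.pow_const 2).const_mul (-b)).exp)).aestronglyMeasurable
  have hb2 : (0:ℝ) < b/2 := by linarith
  have hint : Integrable (fun x : ℝ =>
      Real.exp (-b * x ^ 2) + ((n.factorial : ℝ) * (2/b)^n) * Real.exp (-(b/2) * x ^ 2)) :=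
    (integrable_exp_neg_mul_sq hb).add ((integrable_exp_neg_mul_sq hb2).const_mul _)
  refine hint.mono' hmeas ?_
  filter_upwards with x
  have hx2 : |x| ^ n ≤ 1 + (x^2) ^ n := by
    rcases le_total (|x|) 1 with h | h
    · have : |x| ^ n ≤ 1 := pow_le_one₀ (abs_nonneg x) h
      nlinarith [pow_nonneg (sq_nonneg x) n]
    · have h1 : |x| ^ n ≤ (|x|^2) ^ n := by
        rw [← pow_mul]
        exact pow_le_pow_right₀ h (by omega)
      rw [sq_abs] at h1; linarith
  have key : (x^2)^n ≤ (n.factorial : ℝ) * (2/b)^n * Real.exp ((b/2) * x ^ 2) := by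
    have h0 := Real.pow_div_factorial_le_exp (x := (b/2) * x^2) (by positivity) n
    have hf : (0:ℝ) < (n.factorial : ℝ) := by positivity
    rw [div_le_iff₀ hf, mul_pow] at h0
    have h1 : (b/2)^n * (2/b)^n = 1 := by
      rw [← mul_pow]; field_simp; simp
    calc (x^2)^n = ((b/2)^n * (x^2)^n) * (2/b)^n := by
          rw [mul_comm ((b/2)^n), mul_assoc, h1, mul_one]
      _ ≤ (Real.exp ((b/2) * x^2) * (n.factorial:ℝ)) * (2/b)^n :=
          mul_le_mul_of_nonneg_right h0 (by positivity)
      _ = (n.factorial : ℝ) * (2/b)^n * Real.exp ((b/2) * x ^ 2) := by ring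
  rw [Real.norm_eq_abs, abs_mul, abs_pow, abs_of_nonneg (Real.exp_pos _).le]
  calc |x| ^ n * Real.exp (-b * x ^ 2)
      ≤ (1 + (x^2)^n) * Real.exp (-b * x ^ 2) :=
        mul_le_mul_of_nonneg_right hx2 (Real.exp_pos _).le
    _ = Real.exp (-b * x ^ 2) + (x^2)^n * Real.exp (-b * x ^ 2) := by ring
    _ ≤ Real.exp (-b * x ^ 2) + ((n.factorial : ℝ) * (2/b)^n) * Real.exp (-(b/2) * x ^ 2) := by
        have : (x^2)^n * Real.exp (-b * x ^ 2)
            ≤ ((n.factorial : ℝ) * (2/b)^n * Real.exp ((b/2) * x ^ 2)) * Real.exp (-b * x ^ 2) :=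
          mul_le_mul_of_nonneg_right key (Real.exp_pos _).le
        rw [mul_assoc, ← Real.exp_add] at this
        have he : (b/2) * x ^ 2 + -b * x ^ 2 = -(b/2) * x ^ 2 := by ring
        rw [he] at this
        linarith

lemma aux_int' (n : ℕ) : Integrable (fun x : ℝ => x ^ n * Real.exp (-x ^ 2 / 2)) := by
  have h := aux_int one_half_pos n
  refine h.congr (Eventually.of_forall fun x => ?_)
  congr 2
  ring

lemma tend_top (n : ℕ) :
    Tendsto (fun x : ℝ => x ^ n * Real.exp (-x ^ 2 / 2)) atTop (𝓝 0) := by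
  have h := rpow_mul_exp_neg_mul_sq_isLittleO_exp_neg (b := 1/2) one_half_pos (n : ℝ)
  have h2 : Tendsto (fun x : ℝ => Real.exp (-(1/2) * x)) atTop (𝓝 0) := by
    have := (Real.tendsto_exp_neg_atTop_nhds_zero).comp
      (tendsto_id.atTop_div_const (by norm_num : (0:ℝ) < 2))
    refine this.congr fun x => ?_
    simp only [Function.comp_def, id]
    congr 1
    ring
  have h3 := h.tendsto_zero_of_tendsto h2
  refine h3.congr fun x => ?_
  rw [Real.rpow_natCast]
  congr 2
  ring

lemma tend_bot (n : ℕ) :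
    Tendsto (fun x : ℝ => x ^ n * Real.exp (-x ^ 2 / 2)) atBot (𝓝 0) := by
  have h := ((tend_top n).const_mul ((-1 : ℝ) ^ n)).comp tendsto_neg_atBot_atTop
  simp only [Function.comp_def] at h
  rw [mul_zero] at h
  refine h.congr fun x => ?_
  rw [neg_sq, ← mul_assoc, ← mul_pow]
  norm_num

lemma M0 : ∫ x : ℝ, Real.exp (-x ^ 2 / 2) = Real.sqrt (2 * Real.pi) := by
  have h := integral_gaussian (1/2)
  rw [show Real.pi / (1/2) = 2 * Real.pi by ring] at h
  rw [← h]
  congr 1 with x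
  congr 1
  ring

lemma M1 : ∫ x : ℝ, x * Real.exp (-x ^ 2 / 2) = 0 := by
  have h := integral_neg_eq_self (fun x : ℝ => x * Real.exp (-x ^ 2 / 2)) volume
  simp only [neg_sq, neg_mul] at h
  rw [integral_neg] at h
  linarith

lemma M3 : ∫ x : ℝ, x ^ 3 * Real.exp (-x ^ 2 / 2) = 0 := by
  have h := integral_neg_eq_self (fun x : ℝ => x ^ 3 * Real.exp (-x ^ 2 / 2)) volume
  have hcube : ∀ x : ℝ, (-x) ^ 3 = -x ^ 3 := fun x => by ring
  simp only [neg_sq, hcube, neg_mul] at h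
  rw [integral_neg] at h
  linarith

lemma M2 : ∫ x : ℝ, x ^ 2 * Real.exp (-x ^ 2 / 2) = Real.sqrt (2 * Real.pi) := by
  have hderiv : ∀ x : ℝ, HasDerivAt (fun x : ℝ => -(x * Real.exp (-x ^ 2 / 2)))
      (x ^ 2 * Real.exp (-x ^ 2 / 2) - Real.exp (-x ^ 2 / 2)) x := by
    intro x
    have hu : HasDerivAt (fun x : ℝ => -x ^ 2 / 2) (-x) x := by
      have := ((hasDerivAt_pow 2 x).neg).div_const 2
      simpa using this.congr_deriv (by ring)
    have he := hu.exp
    have := ((hasDerivAt_id x).mul he).neg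
    refine this.congr_deriv ?_
    simp only [id_eq]
    ring
  have hint : Integrable (fun x : ℝ => x ^ 2 * Real.exp (-x ^ 2 / 2) - Real.exp (-x ^ 2 / 2)) := by
    have h0 := aux_int' 0
    simp only [pow_zero, one_mul] at h0
    exact (aux_int' 2).sub h0
  have htop : Tendsto (fun x : ℝ => -(x * Real.exp (-x ^ 2 / 2))) atTop (𝓝 0) := by
    have := (tend_top 1).neg
    simpa using this
  have hbot : Tendsto (fun x : ℝ => -(x * Real.exp (-x ^ 2 / 2))) atBot (𝓝 0) := by
    have := (tend_bot 1).neg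
    simpa using this
  have h := integral_of_hasDerivAt_of_tendsto hderiv hint hbot htop
  rw [sub_zero] at h
  have h0 := aux_int' 0
  simp only [pow_zero, one_mul] at h0
  rw [integral_sub (aux_int' 2) h0] at h
  rw [M0] at h
  linarith

lemma H1 : ∫ x : ℝ in Ioi 0, x * Real.exp (-x ^ 2 / 2) = 1 := by
  have hderiv : ∀ x ∈ Ici (0:ℝ), HasDerivAt (fun x : ℝ => -Real.exp (-x ^ 2 / 2))
      (x * Real.exp (-x ^ 2 / 2)) x := by
    intro x _
    have hu : HasDerivAt (fun x : ℝ => -x ^ 2 / 2) (-x) x := by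
      have := ((hasDerivAt_pow 2 x).neg).div_const 2
      simpa using this.congr_deriv (by ring)
    exact hu.exp.neg.congr_deriv (by ring)
  have hint : IntegrableOn (fun x : ℝ => x * Real.exp (-x ^ 2 / 2)) (Ioi 0) := by
    have := aux_int' 1
    simpa using this.integrableOn
  have htop : Tendsto (fun x : ℝ => -Real.exp (-x ^ 2 / 2)) atTop (𝓝 0) := by
    have := (tend_top 0).neg
    simpa using this
  have h := integral_Ioi_of_hasDerivAt_of_tendsto' hderiv hint htop
  simpa using h

lemma H3 : ∫ x : ℝ in Ioi 0, x ^ 3 * Real.exp (-x ^ 2 / 2) = 2 := by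
  have hderiv : ∀ x ∈ Ici (0:ℝ), HasDerivAt (fun x : ℝ => -((x ^ 2 + 2) * Real.exp (-x ^ 2 / 2)))
      (x ^ 3 * Real.exp (-x ^ 2 / 2)) x := by
    intro x _
    have hu : HasDerivAt (fun x : ℝ => -x ^ 2 / 2) (-x) x := by
      have := ((hasDerivAt_pow 2 x).neg).div_const 2
      simpa using this.congr_deriv (by ring)
    have hp : HasDerivAt (fun x : ℝ => x ^ 2 + 2) (2 * x) x := by
      simpa using ((hasDerivAt_pow 2 x).add_const 2).congr_deriv (by ring)
    exact ((hp.mul hu.exp).neg).congr_deriv (by ring)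
  have hint : IntegrableOn (fun x : ℝ => x ^ 3 * Real.exp (-x ^ 2 / 2)) (Ioi 0) :=
    (aux_int' 3).integrableOn
  have htop : Tendsto (fun x : ℝ => -((x ^ 2 + 2) * Real.exp (-x ^ 2 / 2))) atTop (𝓝 0) := by
    have h2 := tend_top 2
    have h0 := tend_top 0
    simp only [pow_zero, one_mul] at h0
    have := ((h2.add (h0.const_mul 2)).neg)
    norm_num at this
    refine this.congr fun x => ?_
    ring
  have h := integral_Ioi_of_hasDerivAt_of_tendsto' hderiv hint htop
  simpa using h

lemma phi2_decomp {ρ : ℝ} (h1 : -1 < ρ) (h2 : ρ < 1) (x y : ℝ) :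
    phi2 ρ x y = stdPdf x *
      ((Real.sqrt (1 - ρ ^ 2))⁻¹ * stdPdf ((y - ρ * x) / Real.sqrt (1 - ρ ^ 2))) := by
  have hρ2 : (0:ℝ) < 1 - ρ ^ 2 := by nlinarith
  set σ := Real.sqrt (1 - ρ ^ 2) with hσdef
  have hσpos : 0 < σ := Real.sqrt_pos.2 hρ2
  have hσ2 : σ ^ 2 = 1 - ρ ^ 2 := Real.sq_sqrt hρ2.le
  have h2π : Real.sqrt (2 * Real.pi) ^ 2 = 2 * Real.pi :=
    Real.sq_sqrt (by positivity)
  have h2πpos : 0 < Real.sqrt (2 * Real.pi) := Real.sqrt_pos.2 (by positivity)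
  unfold phi2 stdPdf
  rw [div_pow]
  have hexp : -(x ^ 2 - 2 * ρ * x * y + y ^ 2) / (2 * (1 - ρ ^ 2))
      = -x ^ 2 / 2 + -((y - ρ * x) ^ 2 / σ ^ 2) / 2 := by
    rw [hσ2]
    field_simp
    ring
  rw [hexp, Real.exp_add]
  have hm : Real.sqrt (2 * Real.pi) * Real.sqrt (2 * Real.pi) = 2 * Real.pi :=
    Real.mul_self_sqrt (by positivity)
  have hcoef : (1 : ℝ) / (2 * Real.pi * σ)
      = 1 / Real.sqrt (2 * Real.pi) * (σ⁻¹ * (1 / Real.sqrt (2 * Real.pi))) := by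
    simp only [one_div]
    rw [← mul_inv, ← mul_inv]
    congr 1
    linear_combination (-σ) * h2π
  calc 1 / (2 * Real.pi * σ) * (Real.exp (-x ^ 2 / 2) * Real.exp (-((y - ρ * x) ^ 2 / σ ^ 2) / 2))
      = (1 / Real.sqrt (2 * Real.pi) * (σ⁻¹ * (1 / Real.sqrt (2 * Real.pi)))) *
        (Real.exp (-x ^ 2 / 2) * Real.exp (-((y - ρ * x) ^ 2 / σ ^ 2) / 2)) := by rw [hcoef]
    _ = _ := by ring

lemma inner_int {ρ : ℝ} (h1 : -1 < ρ) (h2 : ρ < 1) (x : ℝ) :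
    ∫ y : ℝ, y ^ 3 * phi2 ρ x y
      = stdPdf x * (3 * (1 - ρ ^ 2) * (ρ * x) + (ρ * x) ^ 3) := by
  have hρ2 : (0:ℝ) < 1 - ρ ^ 2 := by nlinarith
  set σ := Real.sqrt (1 - ρ ^ 2) with hσdef
  have hσpos : 0 < σ := Real.sqrt_pos.2 hρ2
  have hσ2 : σ ^ 2 = 1 - ρ ^ 2 := Real.sq_sqrt hρ2.le
  set μ := ρ * x with hμdef
  have step1 : ∀ y : ℝ, y ^ 3 * phi2 ρ x y
      = (stdPdf x * σ⁻¹) * (y ^ 3 * stdPdf ((y - μ) / σ)) := by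
    intro y
    rw [phi2_decomp h1 h2 x y]
    ring
  simp_rw [step1]
  rw [integral_const_mul]
  -- translation
  have step2 : ∫ y : ℝ, y ^ 3 * stdPdf ((y - μ) / σ)
      = ∫ y : ℝ, (y + μ) ^ 3 * stdPdf (y / σ) := by
    rw [← integral_add_right_eq_self (fun y : ℝ => y ^ 3 * stdPdf ((y - μ) / σ)) μ]
    congr 1 with y
    rw [add_sub_cancel_right]
  -- scaling
  have step3 : ∫ y : ℝ, (y + μ) ^ 3 * stdPdf (y / σ)
      = σ * ∫ u : ℝ, (σ * u + μ) ^ 3 * stdPdf u := by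
    have h := MeasureTheory.Measure.integral_comp_mul_left
      (fun y : ℝ => (y + μ) ^ 3 * stdPdf (y / σ)) σ
    rw [abs_of_pos (inv_pos.2 hσpos), smul_eq_mul] at h
    have hc : ∀ u : ℝ, (σ * u + μ) ^ 3 * stdPdf (σ * u / σ) = (σ * u + μ) ^ 3 * stdPdf u :=
      fun u => by rw [mul_div_cancel_left₀ _ (ne_of_gt hσpos)]
    simp only [hc] at h
    rw [h, ← mul_assoc, mul_inv_cancel₀ (ne_of_gt hσpos), one_mul]
  -- expansion and moments
  have step4 : ∫ u : ℝ, (σ * u + μ) ^ 3 * stdPdf u = 3 * σ ^ 2 * μ + μ ^ 3 := by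
    have hexpand : ∀ u : ℝ, (σ * u + μ) ^ 3 * stdPdf u
        = (1 / Real.sqrt (2 * Real.pi)) *
          (σ ^ 3 * (u ^ 3 * Real.exp (-u ^ 2 / 2))
            + (3 * σ ^ 2 * μ * (u ^ 2 * Real.exp (-u ^ 2 / 2))
            + (3 * σ * μ ^ 2 * (u * Real.exp (-u ^ 2 / 2))
            + μ ^ 3 * Real.exp (-u ^ 2 / 2)))) := by
      intro u
      unfold stdPdf
      ring
    simp_rw [hexpand]
    rw [integral_const_mul]
    have i3 := (aux_int' 3).const_mul (σ ^ 3)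
    have i2 := (aux_int' 2).const_mul (3 * σ ^ 2 * μ)
    have i1' := aux_int' 1
    simp only [pow_one] at i1'
    have i1 := i1'.const_mul (3 * σ * μ ^ 2)
    have i0' := aux_int' 0
    simp only [pow_zero, one_mul] at i0'
    have i0 := i0'.const_mul (μ ^ 3)
    have i10 : Integrable (fun u : ℝ => 3 * σ * μ ^ 2 * (u * Real.exp (-u ^ 2 / 2))
        + μ ^ 3 * Real.exp (-u ^ 2 / 2)) := i1.add i0
    have i210 : Integrable (fun u : ℝ => 3 * σ ^ 2 * μ * (u ^ 2 * Real.exp (-u ^ 2 / 2))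
        + (3 * σ * μ ^ 2 * (u * Real.exp (-u ^ 2 / 2)) + μ ^ 3 * Real.exp (-u ^ 2 / 2))) :=
      i2.add i10
    rw [integral_add i3 i210, integral_add i2 i10, integral_add i1 i0,
      integral_const_mul, integral_const_mul, integral_const_mul, integral_const_mul,
      M3, M2, M1, M0]
    have hs : Real.sqrt (2 * Real.pi) ≠ 0 := by positivity
    field_simp
    ring
  rw [step2, step3, step4]
  have : σ⁻¹ * (σ * (3 * σ ^ 2 * μ + μ ^ 3)) = 3 * σ ^ 2 * μ + μ ^ 3 := by
    rw [← mul_assoc, inv_mul_cancel₀ (ne_of_gt hσpos), one_mul]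
  rw [mul_assoc, this, hσ2]

lemma sg_meas : Measurable sg := by
  unfold sg
  exact Measurable.ite measurableSet_Ici measurable_const measurable_const

lemma int2d {ρ : ℝ} (h1 : -1 < ρ) (h2 : ρ < 1) :
    Integrable (fun p : ℝ × ℝ => sg p.1 * p.2 ^ 3 * phi2 ρ p.1 p.2)
      (volume : Measure (ℝ × ℝ)) := by
  have hρ2 : (0:ℝ) < 1 - ρ ^ 2 := by nlinarith
  have hσpos : 0 < Real.sqrt (1 - ρ ^ 2) := Real.sqrt_pos.2 hρ2
  set C : ℝ := 1 / (2 * Real.pi * Real.sqrt (1 - ρ ^ 2)) with hC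
  have hCpos : 0 < C := by positivity
  have hcont : Continuous fun p : ℝ × ℝ => phi2 ρ p.1 p.2 := by
    unfold phi2
    fun_prop
  have hmeas : AEStronglyMeasurable (fun p : ℝ × ℝ => sg p.1 * p.2 ^ 3 * phi2 ρ p.1 p.2)
      (volume : Measure (ℝ × ℝ)) :=
    (((sg_meas.comp measurable_fst).mul (measurable_snd.pow_const 3)).mul
      hcont.measurable).aestronglyMeasurable
  have hg : Integrable (fun x : ℝ => Real.exp (-(1/4 : ℝ) * x ^ 2)) :=
    integrable_exp_neg_mul_sq (by norm_num)
  have hh : Integrable (fun y : ℝ => |y| ^ 3 * Real.exp (-(1/4 : ℝ) * y ^ 2)) := by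
    have := (aux_int (by norm_num : (0:ℝ) < 1/4) 3).abs
    refine this.congr (Eventually.of_forall fun y => ?_)
    simp only [abs_mul, abs_pow, abs_of_nonneg (Real.exp_pos _).le]
  have hgh : Integrable
      (fun p : ℝ × ℝ => Real.exp (-(1/4 : ℝ) * p.1 ^ 2) *
        (|p.2| ^ 3 * Real.exp (-(1/4 : ℝ) * p.2 ^ 2))) (volume : Measure (ℝ × ℝ)) := by
    rw [Measure.volume_eq_prod]
    exact hg.mul_prod hh
  refine (hgh.const_mul C).mono' hmeas (Eventually.of_forall fun p => ?_)
  obtain ⟨x, y⟩ := p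
  simp only
  have hphi_nonneg : 0 ≤ phi2 ρ x y := by
    unfold phi2
    positivity
  have hsg : |sg x| = 1 := by
    unfold sg
    rcases le_or_gt 0 x with h | h
    · rw [if_pos h, abs_one]
    · rw [if_neg (not_le.2 h)]; norm_num
  rw [Real.norm_eq_abs, abs_mul, abs_mul, hsg, one_mul, abs_pow,
    abs_of_nonneg hphi_nonneg]
  have hkey : phi2 ρ x y ≤ C * (Real.exp (-(1/4 : ℝ) * x ^ 2) * Real.exp (-(1/4 : ℝ) * y ^ 2)) := by
    unfold phi2
    rw [← Real.exp_add, ← hC]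
    refine mul_le_mul_of_nonneg_left (Real.exp_le_exp.2 ?_) hCpos.le
    rw [div_le_iff₀ (by positivity : (0:ℝ) < 2 * (1 - ρ ^ 2))]
    nlinarith [sq_nonneg (ρ * x - y), sq_nonneg (x - ρ * y), sq_nonneg x, sq_nonneg y,
      sq_nonneg (x*y)]
  calc |y| ^ 3 * phi2 ρ x y
      ≤ |y| ^ 3 * (C * (Real.exp (-(1/4 : ℝ) * x ^ 2) * Real.exp (-(1/4 : ℝ) * y ^ 2))) :=
        mul_le_mul_of_nonneg_left hkey (by positivity)
    _ = C * (Real.exp (-(1/4 : ℝ) * x ^ 2) * (|y| ^ 3 * Real.exp (-(1/4 : ℝ) * y ^ 2))) := by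
        ring

theorem stmt7 (ρ : ℝ) (h1 : -1 < ρ) (h2 : ρ < 1) :
    ∫ p : ℝ × ℝ, sg p.1 * p.2 ^ 3 * phi2 ρ p.1 p.2
      = (6 * ρ - 2 * ρ ^ 3) / Real.sqrt (2 * Real.pi) := by
  have hρ2 : (0:ℝ) < 1 - ρ ^ 2 := by nlinarith
  have hint := int2d h1 h2
  rw [Measure.volume_eq_prod] at hint
  rw [Measure.volume_eq_prod, integral_prod _ hint]
  have hin : ∀ x : ℝ, ∫ y : ℝ, sg x * y ^ 3 * phi2 ρ x y
      = sg x * (stdPdf x * (3 * (1 - ρ ^ 2) * (ρ * x) + (ρ * x) ^ 3)) := by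
    intro x
    rw [← inner_int h1 h2 x, ← integral_const_mul]
    congr 1 with y
    ring
  simp_rw [hin]
  have habs : ∀ x : ℝ, sg x * (stdPdf x * (3 * (1 - ρ ^ 2) * (ρ * x) + (ρ * x) ^ 3))
      = stdPdf |x| * (3 * (1 - ρ ^ 2) * ρ * |x| + ρ ^ 3 * |x| ^ 3) := by
    intro x
    have hstd : stdPdf |x| = stdPdf x := by unfold stdPdf; rw [sq_abs]
    rw [hstd]
    unfold sg
    rcases le_or_gt 0 x with h | h
    · rw [if_pos h, abs_of_nonneg h]; ring
    · rw [if_neg (not_le.2 h), abs_of_neg h]; ring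
  simp_rw [habs]
  rw [integral_comp_abs (f := fun t => stdPdf t * (3 * (1 - ρ ^ 2) * ρ * t + ρ ^ 3 * t ^ 3))]
  have hsplit : ∀ t : ℝ, stdPdf t * (3 * (1 - ρ ^ 2) * ρ * t + ρ ^ 3 * t ^ 3)
      = (1 / Real.sqrt (2 * Real.pi)) * ((3 * (1 - ρ ^ 2) * ρ) * (t * Real.exp (-t ^ 2 / 2))
          + ρ ^ 3 * (t ^ 3 * Real.exp (-t ^ 2 / 2))) := by
    intro t
    unfold stdPdf
    ring
  simp_rw [hsplit]
  rw [integral_const_mul]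
  have i1 : IntegrableOn (fun t : ℝ => (3 * (1 - ρ ^ 2) * ρ) * (t * Real.exp (-t ^ 2 / 2)))
      (Ioi 0) := by
    have := aux_int' 1
    simp only [pow_one] at this
    exact (this.const_mul _).integrableOn
  have i3 : IntegrableOn (fun t : ℝ => ρ ^ 3 * (t ^ 3 * Real.exp (-t ^ 2 / 2))) (Ioi 0) :=
    ((aux_int' 3).const_mul _).integrableOn
  rw [integral_add i1 i3, integral_const_mul, integral_const_mul, H1, H3]
  have hs : Real.sqrt (2 * Real.pi) ≠ 0 := by positivity
  field_simp
  ring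
end

section
/- If (X,Y) is bivariate normal with standard normal marginals and correlation ρ ∈ (-1,1), then E[Y⁻·1_{X<0} + Y⁺·1_{X≥0}] = (1+ρ)/√(2π), where Y⁺ = max(Y,0) and Y⁻ = max(−Y,0). -/
open MeasureTheory Real Filter Set

namespace Stmt8Aux

noncomputable def kk (ρ t : ℝ) : ℝ :=
  (1 / (Real.sqrt (1 - ρ ^ 2) * Real.sqrt (2 * Real.pi))) *
    Real.exp (-(1 / (2 * (1 - ρ ^ 2))) * t ^ 2)

lemma sqrt_two_pi_pos : 0 < Real.sqrt (2 * Real.pi) :=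
  Real.sqrt_pos.2 (by positivity)

variable {ρ : ℝ} (hs : 0 < 1 - ρ ^ 2)

lemma phi2_nonneg (x y : ℝ) : 0 ≤ phi2 ρ x y := by
  unfold phi2; positivity

lemma phi2_symm (x y : ℝ) : phi2 ρ x y = phi2 ρ y x := by
  unfold phi2; ring_nf

include hs

lemma phi2_eq (x y : ℝ) : phi2 ρ x y = stdPdf y * kk ρ (x - ρ * y) := by
  have hπ : Real.sqrt (2 * Real.pi) * Real.sqrt (2 * Real.pi) = 2 * Real.pi :=
    Real.mul_self_sqrt (by positivity)
  have hexp : -(x ^ 2 - 2 * ρ * x * y + y ^ 2) / (2 * (1 - ρ ^ 2))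
      = -y ^ 2 / 2 + (-(1 / (2 * (1 - ρ ^ 2))) * (x - ρ * y) ^ 2) := by
    field_simp
    ring
  have hc : Real.sqrt (2 * Real.pi) * (Real.sqrt (1 - ρ ^ 2) * Real.sqrt (2 * Real.pi))
      = 2 * Real.pi * Real.sqrt (1 - ρ ^ 2) := by
    rw [show Real.sqrt (2 * Real.pi) * (Real.sqrt (1 - ρ ^ 2) * Real.sqrt (2 * Real.pi))
        = (Real.sqrt (2 * Real.pi) * Real.sqrt (2 * Real.pi)) * Real.sqrt (1 - ρ ^ 2) by ring,
      hπ]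
  rw [phi2, stdPdf, kk, hexp, Real.exp_add, ← hc]
  ring

lemma phi2_eq' (x y : ℝ) : phi2 ρ x y = stdPdf x * kk ρ (y - ρ * x) :=
  (phi2_symm x y).trans (phi2_eq hs y x)

lemma hb_pos : 0 < 1 / (2 * (1 - ρ ^ 2)) := by positivity

lemma kk_integrable : Integrable (kk ρ) :=
  (integrable_exp_neg_mul_sq (hb_pos hs)).const_mul _

lemma kk_mul_integrable : Integrable (fun t => t * kk ρ t) := by
  refine ((integrable_mul_exp_neg_mul_sq (hb_pos hs)).const_mul
    (1 / (Real.sqrt (1 - ρ ^ 2) * Real.sqrt (2 * Real.pi)))).congr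
    (Eventually.of_forall fun t => ?_)
  unfold kk; ring

lemma kk_integral : ∫ t, kk ρ t = 1 := by
  unfold kk
  rw [integral_const_mul, integral_gaussian]
  have h1 : Real.pi / (1 / (2 * (1 - ρ ^ 2))) = (2 * Real.pi) * (1 - ρ ^ 2) := by
    field_simp
  rw [h1, Real.sqrt_mul (x := 2 * Real.pi) (by positivity)]
  have h2 : Real.sqrt (1 - ρ ^ 2) ≠ 0 := (Real.sqrt_pos.2 hs).ne'
  have h3 : Real.sqrt (2 * Real.pi) ≠ 0 := sqrt_two_pi_pos.ne'
  field_simp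

lemma kk_odd : ∫ t, t * kk ρ t = 0 := by
  have h := integral_neg_eq_self (fun t => t * kk ρ t) (volume : Measure ℝ)
  have h2 : ∀ t : ℝ, (-t) * kk ρ (-t) = -(t * kk ρ t) := by
    intro t; unfold kk; rw [neg_sq]; ring
  simp_rw [h2, integral_neg] at h
  linarith

lemma kk_shift (m : ℝ) : ∫ y, y * kk ρ (y - m) = m := by
  have h := integral_add_right_eq_self (μ := volume) (fun y => y * kk ρ (y - m)) m
  simp only [add_sub_cancel_right] at h
  rw [← h]
  have h2 : ∀ y : ℝ, (y + m) * kk ρ y = y * kk ρ y + m * kk ρ y := fun y => by ring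
  simp_rw [h2]
  rw [integral_add (kk_mul_integrable hs) ((kk_integrable hs).const_mul m),
    kk_odd hs, integral_const_mul, kk_integral hs]
  ring

omit hs

lemma stdPdf_eq (x : ℝ) :
    stdPdf x = (1 / Real.sqrt (2 * Real.pi)) * Real.exp (-(1/2 : ℝ) * x ^ 2) := by
  unfold stdPdf
  rw [show -x ^ 2 / 2 = -(1/2 : ℝ) * x ^ 2 by ring]

lemma stdPdf_integrable : Integrable stdPdf :=
  ((integrable_exp_neg_mul_sq (by norm_num : (0:ℝ) < 1/2)).const_mul _).congr
    (Eventually.of_forall fun x => (stdPdf_eq x).symm)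

lemma abs_stdPdf_integrable : Integrable (fun x => |x| * stdPdf x) := by
  refine (((integrable_mul_exp_neg_mul_sq (by norm_num : (0:ℝ) < 1/2)).abs).const_mul
    (1 / Real.sqrt (2 * Real.pi))).congr (Eventually.of_forall fun x => ?_)
  simp only [abs_mul, Real.abs_exp, stdPdf_eq]
  ring

lemma integral_Ioi_mul_exp : ∫ x in Ioi (0:ℝ), x * Real.exp (-(1/2:ℝ) * x ^ 2) = 1 := by
  have A : ∀ x ∈ Ici (0:ℝ),
      HasDerivAt (fun t : ℝ => -Real.exp (-(1/2:ℝ) * t ^ 2))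
        (x * Real.exp (-(1/2:ℝ) * x ^ 2)) x := by
    intro x _
    have h1 : HasDerivAt (fun t : ℝ => -(1/2:ℝ) * t ^ 2) (-(1/2:ℝ) * (2 * x ^ 1)) x :=
      (hasDerivAt_pow 2 x).const_mul (-(1/2:ℝ))
    have h2 := (h1.exp).neg
    exact h2.congr_deriv (by ring)
  have B : Tendsto (fun t : ℝ => -Real.exp (-(1/2:ℝ) * t ^ 2)) atTop (nhds 0) := by
    rw [show (0:ℝ) = -0 by simp]
    refine Tendsto.neg ?_
    refine Real.tendsto_exp_atBot.comp ?_
    exact (tendsto_pow_atTop two_ne_zero).const_mul_atTop_of_neg (by norm_num)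
  have int : IntegrableOn (fun x : ℝ => x * Real.exp (-(1/2:ℝ) * x ^ 2)) (Ioi 0) :=
    (integrable_mul_exp_neg_mul_sq (by norm_num : (0:ℝ) < 1/2)).integrableOn
  have h := integral_Ioi_of_hasDerivAt_of_tendsto' A int B
  simpa using h

lemma abs_stdPdf_integral : ∫ x, |x| * stdPdf x = 2 / Real.sqrt (2 * Real.pi) := by
  have key : ∫ x : ℝ, |x| * Real.exp (-(1/2:ℝ) * x ^ 2)
      = 2 * ∫ x in Ioi (0:ℝ), x * Real.exp (-(1/2:ℝ) * x ^ 2) := by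
    rw [← integral_comp_abs (f := fun t => t * Real.exp (-(1/2:ℝ) * t ^ 2))]
    simp [sq_abs]
  have h1 : ∀ x : ℝ, |x| * stdPdf x
      = (1 / Real.sqrt (2 * Real.pi)) * (|x| * Real.exp (-(1/2:ℝ) * x ^ 2)) := by
    intro x; rw [stdPdf_eq]; ring
  simp_rw [h1]
  rw [integral_const_mul, key, integral_Ioi_mul_exp]
  ring

lemma sg_measurable : Measurable sg := by
  unfold sg
  exact Measurable.ite measurableSet_Ici measurable_const measurable_const

lemma sg_abs (x : ℝ) : |sg x| = 1 := by
  unfold sg; split_ifs <;> norm_num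

lemma sg_mul_self (x : ℝ) : sg x * x = |x| := by
  unfold sg; split_ifs with h
  · rw [abs_of_nonneg h]; ring
  · rw [abs_of_neg (lt_of_not_ge h)]; ring

include hs

lemma phi2_continuous : Continuous fun p : ℝ × ℝ => phi2 ρ p.1 p.2 := by
  unfold phi2; fun_prop

lemma H1_integrable : Integrable (fun p : ℝ × ℝ => |p.2| * phi2 ρ p.1 p.2) := by
  rw [Measure.volume_eq_prod]
  refine (integrable_prod_iff' ?_).2 ⟨?_, ?_⟩
  · exact ((continuous_snd.abs.mul (phi2_continuous hs))).aestronglyMeasurable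
  · refine Eventually.of_forall fun y => ?_
    simp_rw [phi2_eq hs]
    refine (((kk_integrable hs).comp_sub_right (ρ * y)).const_mul
      (|y| * stdPdf y)).congr (Eventually.of_forall fun x => ?_)
    ring
  · have h : ∀ y : ℝ, ∫ x, ‖|y| * phi2 ρ x y‖ = |y| * stdPdf y := by
      intro y
      have hn : ∀ x : ℝ, ‖|y| * phi2 ρ x y‖ = |y| * phi2 ρ x y := by
        intro x
        exact Real.norm_of_nonneg (mul_nonneg (abs_nonneg _) (phi2_nonneg x y))
      simp_rw [hn, phi2_eq hs, integral_const_mul,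
        integral_sub_right_eq_self (kk ρ) (ρ * y), kk_integral hs]
      ring
    exact abs_stdPdf_integrable.congr (Eventually.of_forall fun y => (h y).symm)

lemma H2_integrable : Integrable (fun p : ℝ × ℝ => p.2 * sg p.1 * phi2 ρ p.1 p.2) := by
  refine (H1_integrable hs).mono ?_ (Eventually.of_forall fun p => ?_)
  · exact ((measurable_snd.mul (sg_measurable.comp measurable_fst)).mul
      (phi2_continuous hs).measurable).aestronglyMeasurable
  · rw [Real.norm_eq_abs, Real.norm_eq_abs, abs_mul, abs_mul, abs_mul, abs_abs,
      sg_abs, mul_one, abs_of_nonneg (phi2_nonneg p.1 p.2)]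

lemma marg_x (y : ℝ) : ∫ x, phi2 ρ x y = stdPdf y := by
  simp_rw [phi2_eq hs, integral_const_mul,
    integral_sub_right_eq_self (kk ρ) (ρ * y), kk_integral hs, mul_one]

lemma inner_y (x : ℝ) : ∫ y, y * phi2 ρ x y = stdPdf x * (ρ * x) := by
  have h : ∀ y : ℝ, y * phi2 ρ x y = stdPdf x * (y * kk ρ (y - ρ * x)) := by
    intro y; rw [phi2_eq' hs]; ring
  simp_rw [h, integral_const_mul, kk_shift hs (ρ * x)]

lemma H1_integral :
    ∫ p : ℝ × ℝ, |p.2| * phi2 ρ p.1 p.2 = 2 / Real.sqrt (2 * Real.pi) := by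
  have hint := H1_integrable hs
  rw [Measure.volume_eq_prod] at hint ⊢
  rw [integral_prod_symm _ hint]
  have h : ∀ y : ℝ, ∫ x, |y| * phi2 ρ x y = |y| * stdPdf y := by
    intro y
    rw [integral_const_mul, marg_x hs]
  simp_rw [h]
  exact abs_stdPdf_integral

lemma H2_integral :
    ∫ p : ℝ × ℝ, p.2 * sg p.1 * phi2 ρ p.1 p.2 = ρ * (2 / Real.sqrt (2 * Real.pi)) := by
  have hint := H2_integrable hs
  rw [Measure.volume_eq_prod] at hint ⊢
  rw [integral_prod _ hint]
  have h : ∀ x : ℝ, ∫ y, y * sg x * phi2 ρ x y = ρ * (|x| * stdPdf x) := by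
    intro x
    have h2 : ∀ y : ℝ, y * sg x * phi2 ρ x y = sg x * (y * phi2 ρ x y) := by
      intro y; ring
    simp_rw [h2, integral_const_mul, inner_y hs]
    rw [← sg_mul_self x]
    ring
  simp_rw [h, integral_const_mul, abs_stdPdf_integral]

end Stmt8Aux

theorem stmt8 (ρ : ℝ) (h1 : -1 < ρ) (h2 : ρ < 1) :
    ∫ p : ℝ × ℝ,
        (max (-p.2) 0 * (if p.1 < 0 then (1 : ℝ) else 0) +
          max p.2 0 * (if 0 ≤ p.1 then (1 : ℝ) else 0)) * phi2 ρ p.1 p.2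
      = (1 + ρ) / Real.sqrt (2 * Real.pi) := by
  have hs : 0 < 1 - ρ ^ 2 := by nlinarith
  have hF : ∀ p : ℝ × ℝ,
      (max (-p.2) 0 * (if p.1 < 0 then (1 : ℝ) else 0) +
          max p.2 0 * (if 0 ≤ p.1 then (1 : ℝ) else 0)) * phi2 ρ p.1 p.2
        = (1/2 : ℝ) * (|p.2| * phi2 ρ p.1 p.2)
          + (1/2 : ℝ) * (p.2 * sg p.1 * phi2 ρ p.1 p.2) := by
    rintro ⟨x, y⟩
    have hmax1 : max (-y) 0 = (|y| - y) / 2 := by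
      rcases le_total 0 y with h | h
      · rw [max_eq_right (neg_nonpos.2 h), abs_of_nonneg h]; ring
      · rw [max_eq_left (neg_nonneg.2 h), abs_of_nonpos h]; ring
    have hmax2 : max y 0 = (|y| + y) / 2 := by
      rcases le_total 0 y with h | h
      · rw [max_eq_left h, abs_of_nonneg h]; ring
      · rw [max_eq_right h, abs_of_nonpos h]; ring
    simp only [hmax1, hmax2, sg]
    by_cases hx : 0 ≤ x
    · rw [if_neg (not_lt.2 hx), if_pos hx, if_pos hx]; ring
    · rw [if_pos (lt_of_not_ge hx), if_neg hx, if_neg hx]; ring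
  simp_rw [hF]
  rw [integral_add ((Stmt8Aux.H1_integrable hs).const_mul _)
    ((Stmt8Aux.H2_integrable hs).const_mul _),
    integral_const_mul, integral_const_mul,
    Stmt8Aux.H1_integral hs, Stmt8Aux.H2_integral hs]
  have h3 : Real.sqrt (2 * Real.pi) ≠ 0 := Stmt8Aux.sqrt_two_pi_pos.ne'
  field_simp
end

section
/- Define V_s(ρ) = 2(arctan(√(1-ρ²)/ρ) − ρ√(1-ρ²)) − (1−ρ)² for ρ ∈ (0,1). Then as ρ → 1⁻, V_s(ρ) = (8√2/3)·(1−ρ)^{3/2} + o((1−ρ)^{3/2}). -/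
open MeasureTheory Real Filter Set

lemma numer_deriv (ρ : ℝ) (h0 : 0 < ρ) (h1 : ρ < 1) :
    HasDerivAt (fun ρ : ℝ =>
      2 * (Real.arctan (Real.sqrt (1 - ρ ^ 2) / ρ) - ρ * Real.sqrt (1 - ρ ^ 2)) - (1 - ρ) ^ 2)
      (-4 * Real.sqrt (1 - ρ ^ 2) + 2 * (1 - ρ)) ρ := by
  have hpos : (0:ℝ) < 1 - ρ ^ 2 := by nlinarith
  set s := Real.sqrt (1 - ρ ^ 2) with hs
  have hspos : 0 < s := Real.sqrt_pos.mpr hpos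
  have hs2 : s ^ 2 = 1 - ρ ^ 2 := Real.sq_sqrt hpos.le
  have hinner : HasDerivAt (fun ρ : ℝ => 1 - ρ ^ 2) (-(2 * ρ)) ρ := by
    simpa using ((hasDerivAt_pow 2 ρ).const_sub 1)
  have hsq : HasDerivAt (fun ρ : ℝ => Real.sqrt (1 - ρ ^ 2)) (-ρ / s) ρ := by
    have := (Real.hasDerivAt_sqrt (ne_of_gt hpos)).comp ρ hinner
    refine this.congr_deriv ?_
    field_simp
    ring
  have hdiv : HasDerivAt (fun ρ : ℝ => Real.sqrt (1 - ρ ^ 2) / ρ)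
      ((-ρ / s * ρ - s * 1) / ρ ^ 2) ρ :=
    hsq.div (hasDerivAt_id ρ) (ne_of_gt h0)
  have harc : HasDerivAt (fun ρ : ℝ => Real.arctan (Real.sqrt (1 - ρ ^ 2) / ρ)) (-1 / s) ρ := by
    have := hdiv.arctan
    convert this using 1
    have h1 : (1 + (s / ρ) ^ 2) = 1 / ρ ^ 2 := by
      field_simp
      nlinarith [hs2]
    rw [h1]
    field_simp
    linear_combination hs2
  have hprod : HasDerivAt (fun ρ : ℝ => ρ * Real.sqrt (1 - ρ ^ 2))
      (1 * s + ρ * (-ρ / s)) ρ := (hasDerivAt_id ρ).mul hsq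
  have hsquare : HasDerivAt (fun ρ : ℝ => (1 - ρ) ^ 2) (2 * (1 - ρ) * (-1)) ρ := by
    have h' : HasDerivAt (fun ρ : ℝ => 1 - ρ) (-1) ρ := by
      simpa using (hasDerivAt_id ρ).const_sub 1
    simpa using (h'.fun_pow 2)
  have := (((harc.sub hprod).const_mul 2).sub hsquare)
  refine this.congr_deriv ?_
  field_simp
  nlinarith [hs2, hspos]

lemma sqrt_rpow_half (x : ℝ) : x ^ ((1:ℝ)/2) = Real.sqrt x := (Real.sqrt_eq_rpow x).symm


theorem stmt17 :
    Filter.Tendsto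
      (fun ρ : ℝ =>
        (2 * (Real.arctan (Real.sqrt (1 - ρ ^ 2) / ρ) - ρ * Real.sqrt (1 - ρ ^ 2)) - (1 - ρ) ^ 2) /
          (1 - ρ) ^ ((3 : ℝ) / 2))
      (nhdsWithin 1 (Set.Iio 1)) (nhds (8 * Real.sqrt 2 / 3)) := by
  have hIoo : Set.Ioo (0:ℝ) 1 ∈ nhdsWithin (1:ℝ) (Set.Iio 1) :=
    Ioo_mem_nhdsLT_of_mem (by constructor <;> norm_num)
  apply HasDerivAt.lhopital_zero_nhdsLT
    (f' := fun ρ : ℝ => -4 * Real.sqrt (1 - ρ ^ 2) + 2 * (1 - ρ))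
    (g' := fun ρ : ℝ => 3 / 2 * (1 - ρ) ^ ((1:ℝ)/2) * (-1))
  · filter_upwards [hIoo] with ρ hρ
    exact numer_deriv ρ hρ.1 hρ.2
  · filter_upwards [hIoo] with ρ hρ
    have hlin : HasDerivAt (fun ρ : ℝ => 1 - ρ) (-1) ρ := by
      simpa using (hasDerivAt_id ρ).const_sub 1
    have := (Real.hasDerivAt_rpow_const (x := 1 - ρ) (p := 3/2)
      (Or.inr (by norm_num))).comp ρ hlin
    refine this.congr_deriv ?_
    norm_num
  · filter_upwards [hIoo] with ρ hρ
    have : (0:ℝ) < (1 - ρ) ^ ((1:ℝ)/2) := Real.rpow_pos_of_pos (by linarith [hρ.2]) _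
    intro h
    nlinarith
  · -- numerator tends to 0
    have hc : ContinuousAt (fun ρ : ℝ =>
        2 * (Real.arctan (Real.sqrt (1 - ρ ^ 2) / ρ) - ρ * Real.sqrt (1 - ρ ^ 2)) - (1 - ρ) ^ 2) 1 := by
      have csqrt : ContinuousAt (fun ρ : ℝ => Real.sqrt (1 - ρ ^ 2)) 1 :=
        (Real.continuous_sqrt.comp (by continuity)).continuousAt
      exact ((Real.continuous_arctan.continuousAt.comp
        (csqrt.div continuousAt_id (by norm_num))).sub
        (continuousAt_id.mul csqrt)).const_mul 2 |>.sub ((by continuity : Continuous fun ρ : ℝ => (1 - ρ) ^ 2).continuousAt)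
    have := hc.tendsto.mono_left (nhdsWithin_le_nhds (s := Set.Iio (1:ℝ)))
    simpa using this
  · -- denominator tends to 0
    have hc : Filter.Tendsto (fun ρ : ℝ => 1 - ρ) (nhdsWithin 1 (Set.Iio 1)) (nhds 0) := by
      have : Filter.Tendsto (fun ρ : ℝ => 1 - ρ) (nhds 1) (nhds 0) := by
        have hcont : Continuous (fun ρ : ℝ => 1 - ρ) := by continuity
        simpa using hcont.tendsto 1
      exact this.mono_left (nhdsWithin_le_nhds (s := Set.Iio (1:ℝ)))
    have hr : ContinuousAt (fun x : ℝ => x ^ ((3:ℝ)/2)) 0 :=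
      Real.continuousAt_rpow_const 0 (3/2) (Or.inr (by norm_num))
    have := hr.tendsto.comp hc
    simpa [Function.comp_def, Real.zero_rpow (by norm_num : ((3:ℝ)/2) ≠ 0)] using this
  · -- ratio of derivatives
    have heq : ∀ ρ ∈ Set.Ioo (0:ℝ) 1,
        (8 * Real.sqrt (1 + ρ) - 4 * Real.sqrt (1 - ρ)) / 3 =
        (-4 * Real.sqrt (1 - ρ ^ 2) + 2 * (1 - ρ)) /
          (3 / 2 * (1 - ρ) ^ ((1:ℝ)/2) * (-1)) := by
      intro ρ hρ
      have h1 : (0:ℝ) < 1 - ρ := by linarith [hρ.2]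
      have h2 : (0:ℝ) ≤ 1 + ρ := by linarith [hρ.1]
      have hfac : 1 - ρ ^ 2 = (1 - ρ) * (1 + ρ) := by ring
      rw [hfac, Real.sqrt_mul h1.le, sqrt_rpow_half]
      set t := Real.sqrt (1 - ρ) with ht
      have htpos : 0 < t := Real.sqrt_pos.mpr h1
      have ht2 : t ^ 2 = 1 - ρ := Real.sq_sqrt h1.le
      rw [← ht2]
      field_simp
      ring
    have hlim : Filter.Tendsto (fun ρ : ℝ => (8 * Real.sqrt (1 + ρ) - 4 * Real.sqrt (1 - ρ)) / 3)
        (nhdsWithin 1 (Set.Iio 1)) (nhds (8 * Real.sqrt 2 / 3)) := by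
      have hc : ContinuousAt (fun ρ : ℝ => (8 * Real.sqrt (1 + ρ) - 4 * Real.sqrt (1 - ρ)) / 3) 1 := by
        fun_prop
      have := hc.tendsto.mono_left (nhdsWithin_le_nhds (s := Set.Iio (1:ℝ)))
      convert this using 2
      norm_num
    refine hlim.congr' ?_
    filter_upwards [hIoo] with ρ hρ
    exact heq ρ hρ
end

section
/- With V₁(ρ) = arccos(ρ)(π − arccos(ρ))(1−ρ²) and V_s(ρ) = 2(arctan(√(1-ρ²)/ρ) − ρ√(1-ρ²)) − (1−ρ)², the ratio V_s(ρ)/V₁(ρ) converges to 4/(3π) as ρ → 1⁻. -/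
open MeasureTheory Real Filter Set

lemma numBound {θ : ℝ} (h0 : 0 < θ) (h1 : θ ≤ 1/2) :
    |(2*(θ - Real.cos θ * Real.sin θ) - (1 - Real.cos θ)^2)/θ^3 - 4/3| ≤ 11/6*θ := by
  have habs2 : |2*θ| ≤ 1 := by rw [abs_of_pos (by linarith)]; linarith
  have habs1 : |θ| ≤ 1 := by rw [abs_of_pos h0]; linarith
  have hs := Real.sin_bound habs2
  have hc := Real.cos_bound habs1
  rw [abs_of_pos (by linarith : (0:ℝ) < 2*θ)] at hs
  rw [abs_of_pos h0] at hc
  have h2m : Real.sin (2*θ) = 2 * Real.sin θ * Real.cos θ := Real.sin_two_mul θ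
  have hq : θ^2 ≤ 1 := by nlinarith
  have h4 : θ^4 ≤ θ^2 := by nlinarith [sq_nonneg θ]
  have hcos : |1 - Real.cos θ| ≤ θ^2 := by
    rw [abs_sub_le_iff] at hc
    rw [abs_le]; constructor <;> nlinarith [hc.1, hc.2, sq_nonneg θ]
  have hθ3 : (0:ℝ) < θ^3 := by positivity
  have key : |(2*(θ - Real.cos θ * Real.sin θ) - (1 - Real.cos θ)^2) - 4/3*θ^3| ≤ 11/6*θ^4 := by
    have e1 : (2*(θ - Real.cos θ * Real.sin θ) - (1 - Real.cos θ)^2) - 4/3*θ^3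
        = -(Real.sin (2*θ) - (2*θ - (2*θ)^3/6)) - (1 - Real.cos θ)^2 := by
      rw [h2m]; ring
    have t2 : (1 - Real.cos θ)^2 ≤ θ^2*θ^2 := by
      have := abs_le.mp hcos; nlinarith [this.1, this.2]
    rw [e1]
    calc |-(Real.sin (2*θ) - (2*θ - (2*θ)^3/6)) - (1 - Real.cos θ)^2|
        ≤ |Real.sin (2*θ) - (2*θ - (2*θ)^3/6)| + |(1 - Real.cos θ)^2| := by
          rw [← abs_neg (Real.sin (2*θ) - _)]; exact abs_sub _ _
      _ ≤ (2*θ)^4 * (5/96) + θ^2*θ^2 :=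
          add_le_add (le_trans hs (by nlinarith [mul_nonneg (by positivity : (0:ℝ) ≤ (2*θ)^4) (by linarith : (0:ℝ) ≤ 1 - 2*θ)])) (by rwa [abs_of_nonneg (sq_nonneg _)])
      _ ≤ 11/6*θ^4 := by nlinarith [sq_nonneg θ]
  have e2 : (2*(θ - Real.cos θ * Real.sin θ) - (1 - Real.cos θ)^2)/θ^3 - 4/3
      = ((2*(θ - Real.cos θ * Real.sin θ) - (1 - Real.cos θ)^2) - 4/3*θ^3)/θ^3 := by
    field_simp
  rw [e2, abs_div, abs_of_pos hθ3, div_le_iff₀ hθ3]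
  calc |(2*(θ - Real.cos θ * Real.sin θ) - (1 - Real.cos θ)^2) - 4/3*θ^3| ≤ 11/6*θ^4 := key
    _ = 11/6*θ*θ^3 := by ring

lemma sinDivLim : Tendsto (fun θ : ℝ => Real.sin θ / θ) (nhdsWithin 0 (Ioi 0)) (nhds 1) := by
  have h := (Real.hasDerivAt_sin 0)
  rw [Real.cos_zero] at h
  have := hasDerivAt_iff_tendsto_slope.mp h
  refine (this.mono_left (nhdsWithin_mono _ ?_)).congr ?_
  · intro x hx; exact ne_of_gt hx
  · intro x; simp [slope_fun_def]; ring

lemma numLim : Tendsto (fun θ : ℝ => (2*(θ - Real.cos θ * Real.sin θ) - (1 - Real.cos θ)^2)/θ^3)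
    (nhdsWithin 0 (Ioi 0)) (nhds (4/3)) := by
  have h0 : Tendsto (fun θ : ℝ =>
      (2*(θ - Real.cos θ * Real.sin θ) - (1 - Real.cos θ)^2)/θ^3 - 4/3)
      (nhdsWithin 0 (Ioi 0)) (nhds 0) := by
    apply squeeze_zero_norm' (a := fun θ : ℝ => 11/6*θ)
    · have hmem : Ioo (0:ℝ) (1/2) ∈ nhdsWithin (0:ℝ) (Ioi 0) := by
        rw [← Ioi_inter_Iio]
        exact Filter.inter_mem self_mem_nhdsWithin
          (mem_nhdsWithin_of_mem_nhds (Iio_mem_nhds (by norm_num)))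
      filter_upwards [hmem] with θ hθ
      exact numBound hθ.1 (le_of_lt hθ.2)
    · have : Tendsto (fun θ : ℝ => 11/6*θ) (nhds 0) (nhds (11/6*0)) :=
        (continuous_const.mul continuous_id).tendsto 0
      simpa using this.mono_left nhdsWithin_le_nhds
  have := h0.add_const (4/3)
  simpa using this

lemma denLim : Tendsto (fun θ : ℝ => θ*(Real.pi - θ)*Real.sin θ^2/θ^3)
    (nhdsWithin 0 (Ioi 0)) (nhds Real.pi) := by
  have h1 : Tendsto (fun θ : ℝ => (Real.pi - θ) * (Real.sin θ/θ)^2)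
      (nhdsWithin 0 (Ioi 0)) (nhds ((Real.pi - 0) * 1^2)) := by
    apply Tendsto.mul
    · exact ((continuous_const.sub continuous_id).tendsto 0).mono_left nhdsWithin_le_nhds
    · exact sinDivLim.pow 2
  simp only [sub_zero, one_pow, mul_one] at h1
  refine h1.congr' ?_
  filter_upwards [self_mem_nhdsWithin] with θ (hθ : (0:ℝ) < θ)
  have : θ ≠ 0 := ne_of_gt hθ
  field_simp

lemma coreLim : Tendsto (fun θ : ℝ =>
      (2*(θ - Real.cos θ * Real.sin θ) - (1 - Real.cos θ)^2) / (θ*(Real.pi - θ)*Real.sin θ^2))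
    (nhdsWithin 0 (Ioi 0)) (nhds (4 / (3 * Real.pi))) := by
  have h := numLim.div denLim Real.pi_ne_zero
  have he : (4:ℝ)/3/Real.pi = 4/(3*Real.pi) := by
    rw [div_div]
  rw [he] at h
  refine h.congr' ?_
  filter_upwards [self_mem_nhdsWithin] with θ (hθ : (0:ℝ) < θ)
  have h3 : θ^3 ≠ 0 := by positivity
  simp only [Pi.div_apply]
  rw [div_div_div_cancel_right₀ h3]

theorem stmt18 :
    Filter.Tendsto
      (fun ρ : ℝ =>
        (2 * (Real.arctan (Real.sqrt (1 - ρ ^ 2) / ρ) - ρ * Real.sqrt (1 - ρ ^ 2)) - (1 - ρ) ^ 2) /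
          (Real.arccos ρ * (Real.pi - Real.arccos ρ) * (1 - ρ ^ 2)))
      (nhdsWithin 1 (Set.Iio 1)) (nhds (4 / (3 * Real.pi))) := by
  have harc : Tendsto Real.arccos (nhdsWithin 1 (Set.Iio 1)) (nhdsWithin 0 (Ioi 0)) := by
    rw [tendsto_nhdsWithin_iff]
    constructor
    · have := (Real.continuous_arccos.tendsto 1).mono_left (nhdsWithin_le_nhds (s := Set.Iio 1))
      rwa [Real.arccos_one] at this
    · filter_upwards [self_mem_nhdsWithin] with ρ (hρ : ρ < 1)
      exact Real.arccos_pos.mpr hρ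
  have h := coreLim.comp harc
  refine h.congr' ?_
  have hmem : Ioo (0:ℝ) 1 ∈ nhdsWithin (1:ℝ) (Set.Iio 1) := by
    rw [← Ioi_inter_Iio]
    exact Filter.inter_mem (mem_nhdsWithin_of_mem_nhds (Ioi_mem_nhds zero_lt_one))
      self_mem_nhdsWithin
  filter_upwards [hmem] with ρ hρ
  obtain ⟨hρ0, hρ1⟩ := hρ
  set θ := Real.arccos ρ with hθdef
  have hc : Real.cos θ = ρ := Real.cos_arccos (by linarith) (le_of_lt hρ1)
  have hs : Real.sin θ = Real.sqrt (1 - ρ^2) := Real.sin_arccos ρ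
  have hsq : Real.sin θ^2 = 1 - ρ^2 := by
    rw [hs]
    exact Real.sq_sqrt (by nlinarith)
  have htan : Real.arctan (Real.sqrt (1 - ρ^2) / ρ) = θ := by
    have ht : Real.sqrt (1 - ρ^2) / ρ = Real.tan θ := by
      rw [Real.tan_eq_sin_div_cos, hc, hs]
    rw [ht]
    exact Real.arctan_tan (by linarith [Real.arccos_nonneg ρ, Real.pi_pos])
      (Real.arccos_lt_pi_div_two.mpr hρ0)
  simp only [Function.comp_apply]
  rw [hsq, hc, hs, htan]
end
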